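/- Define a_b = ∑_{(r_1,...,r_ℓ) ordered partition of b} ∏_i (r_i + 1), with a_0 = 1. Then for all b ≥ 3, a_b = 4·a_{b-1} - 2·a_{b-2}. -/

import Mathlib

/-- `cardCount b = ∑ over ordered partitions (r_1,…,r_ℓ) of b of ∏ (r_i + 1)`,
the number of multiplex juggling cards with `b` balls (with `cardCount 0 = 1`). -/
def cardCount (b : ℕ) : ℕ := ∑ c : Composition b, (c.blocks.map (· + 1)).prod

/-- Splitting off the first block of a composition of `n + 1`. -/
def consComp (n : ℕ) (p : Σ k : Fin (n + 1), Composition (n - k)) : Composition (n + 1) :=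
  ⟨((p.1 : ℕ) + 1) :: p.2.blocks, by
      intro i hi
      rcases List.mem_cons.1 hi with h | h
      · omega
      · exact p.2.blocks_pos h, by
      have := p.2.blocks_sum
      have := p.1.2
      simp only [List.sum_cons, this]
      omega⟩

lemma consComp_bij (n : ℕ) : Function.Bijective (consComp n) := by
  constructor
  · rintro ⟨⟨k, hk⟩, c⟩ ⟨⟨k', hk'⟩, c'⟩ h
    have hb : ((k : ℕ) + 1) :: c.blocks = (k' + 1) :: c'.blocks := congrArg Composition.blocks h
    have hkk : k = k' := by
      have := List.head_eq_of_cons_eq hb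
      omega
    subst hkk
    have : c.blocks = c'.blocks := List.tail_eq_of_cons_eq hb
    simp [Composition.ext_iff, this]
  · rintro ⟨blocks, hpos, hsum⟩
    match blocks, hsum with
    | a :: l, hsum =>
      have ha : 0 < a := hpos List.mem_cons_self
      have hl : l.sum = n + 1 - a := by simp at hsum; omega
      have hk : a - 1 < n + 1 := by simp at hsum; omega
      refine ⟨⟨⟨a - 1, hk⟩, ⟨l, fun hi => hpos (List.mem_cons_of_mem _ hi), ?_⟩⟩, ?_⟩
      · simp; omega
      · simp [consComp, Composition.ext_iff]
        omega

lemma cardCount_conv (n : ℕ) :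
    cardCount (n + 1) = ∑ k ∈ Finset.range (n + 1), (k + 2) * cardCount (n - k) := by
  rw [cardCount,
    ← Fintype.sum_bijective (consComp n) (consComp_bij n)
      (fun p => ((p.1 : ℕ) + 2) * (p.2.blocks.map (· + 1)).prod) _
      (by rintro ⟨k, c⟩; simp [consComp])]
  rw [← Finset.univ_sigma_univ, Finset.sum_sigma]
  rw [← Fin.sum_univ_eq_sum_range (fun k => (k + 2) * cardCount (n - k))]
  refine Finset.sum_congr rfl fun k _ => ?_
  rw [cardCount, Finset.mul_sum]

lemma cardCount_aux (n : ℕ) :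
    cardCount (n + 2) = 3 * cardCount (n + 1) + ∑ k ∈ Finset.range (n + 1), cardCount k := by
  rw [cardCount_conv]
  rw [Finset.sum_range_succ']
  simp only [Nat.sub_zero, Nat.succ_sub_succ]
  have h1 : ∀ k ∈ Finset.range (n + 1), (k + 1 + 2) * cardCount (n - k)
      = (k + 2) * cardCount (n - k) + cardCount (n - k) := by intro k _; ring
  rw [Finset.sum_congr rfl h1, Finset.sum_add_distrib, ← cardCount_conv]
  have h2 : ∑ k ∈ Finset.range (n + 1), cardCount (n - k)
      = ∑ k ∈ Finset.range (n + 1), cardCount k := by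
    rw [← Finset.sum_range_reflect (fun j => cardCount j) (n + 1)]
    refine Finset.sum_congr rfl fun k hk => ?_
    congr 1
  rw [h2]
  omega

theorem cardCount_linear_recurrence (b : ℕ) (hb : 3 ≤ b) :
    (cardCount b : ℤ) = 4 * cardCount (b - 1) - 2 * cardCount (b - 2) := by
  obtain ⟨n, rfl⟩ : ∃ n, b = n + 3 := ⟨b - 3, by omega⟩
  have e1 := cardCount_aux (n + 1)
  have e2 := cardCount_aux n
  rw [Finset.sum_range_succ] at e1
  have h1 : n + 1 + 2 = n + 3 := rfl
  have h2 : n + 1 + 1 = n + 2 := rfl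
  rw [h1, h2] at e1
  have h3 : n + 3 - 1 = n + 2 := rfl
  have h4 : n + 3 - 2 = n + 1 := rfl
  rw [h3, h4]
  omega
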